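/- Let m ≥ 8 be an integer. There exists a subset Λ of {−1, 1}^m with |Λ| ≥ e^{m/8} such that for all distinct ι, ι' ∈ Λ, the ℓ¹-distance ‖ι − ι'‖₁ = 2 ∑_{j=1}^{m} 1_{{ι_j ≠ ι'_j}} is at least m/2. -/

import Mathlib

open Finset

namespace VG


variable {m : ℕ}

def d (x y : Fin m → Bool) : ℕ := (univ.filter fun j => x j ≠ y j).card

lemma d_comm (x y : Fin m → Bool) : d x y = d y x := by
  unfold d; congr 1; ext j; simp [ne_comm]

lemma disag_inj (x y y' : Fin m → Bool)
    (h : (univ.filter fun j => x j ≠ y j) = (univ.filter fun j => x j ≠ y' j)) :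
    y = y' := by
  funext j
  have hj : (x j ≠ y j) ↔ (x j ≠ y' j) := by
    constructor
    · intro h1
      have h2 : j ∈ univ.filter fun j => x j ≠ y j := by simp [h1]
      rw [h] at h2; simpa using h2
    · intro h1
      have h2 : j ∈ univ.filter fun j => x j ≠ y' j := by simp [h1]
      rw [← h] at h2; simpa using h2
  revert hj
  cases x j <;> cases y j <;> cases y' j <;> decide

lemma card_ball (k : ℕ) (x : Fin m → Bool) :
    (univ.filter fun y => d x y ≤ k).card ≤ ∑ i ∈ range (k+1), m.choose i := by
  have h1 : (univ.filter fun y => d x y ≤ k).card ≤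
      ((univ : Finset (Fin m)).powerset.filter fun s => s.card ≤ k).card := by
    apply Finset.card_le_card_of_injOn (fun y => univ.filter fun j => x j ≠ y j)
    · intro y hy
      simp only [mem_coe, mem_filter] at hy ⊢
      exact ⟨mem_powerset.2 (filter_subset _ _), hy.2⟩
    · intro y _ y' _ h
      exact disag_inj x y y' h
  have h2 : ((univ : Finset (Fin m)).powerset.filter fun s => s.card ≤ k) =
      (range (k+1)).biUnion (fun i => (univ : Finset (Fin m)).powersetCard i) := by
    ext s
    simp only [mem_filter, mem_powerset, mem_biUnion, mem_range, Nat.lt_succ_iff,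
      Finset.mem_powersetCard]
    constructor
    · rintro ⟨hs, hc⟩; exact ⟨s.card, hc, hs, rfl⟩
    · rintro ⟨i, hi, hs, hc⟩; exact ⟨hs, hc ▸ hi⟩
  rw [h2] at h1
  calc (univ.filter fun y => d x y ≤ k).card
      ≤ _ := h1
    _ ≤ ∑ i ∈ range (k+1), ((univ : Finset (Fin m)).powersetCard i).card :=
        Finset.card_biUnion_le
    _ = ∑ i ∈ range (k+1), m.choose i := by
        simp [Finset.card_powersetCard]

lemma exists_packing (hm : 1 ≤ m) : ∃ S : Finset (Fin m → Bool),
    (∀ x ∈ S, ∀ y ∈ S, x ≠ y → m ≤ 4 * d x y) ∧ ∀ y, ∃ x ∈ S, 4 * d x y < m := by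
  classical
  set 𝒮 := (univ : Finset (Finset (Fin m → Bool))).filter
    (fun S => ∀ x ∈ S, ∀ y ∈ S, x ≠ y → m ≤ 4 * d x y) with h𝒮
  have hne : 𝒮.Nonempty := ⟨∅, by simp [h𝒮]⟩
  obtain ⟨S, hS, hmax⟩ := 𝒮.exists_maximal hne
  rw [h𝒮, mem_filter] at hS
  refine ⟨S, hS.2, ?_⟩
  intro y
  by_cases hy : y ∈ S
  · refine ⟨y, hy, ?_⟩
    have : d y y = 0 := by simp [d]
    omega
  by_contra hc
  push_neg at hc
  have hgood : insert y S ∈ 𝒮 := by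
    rw [h𝒮, mem_filter]
    refine ⟨mem_univ _, ?_⟩
    intro a ha b hb hab
    rcases mem_insert.1 ha with rfl | ha'
    · rcases mem_insert.1 hb with rfl | hb'
      · exact absurd rfl hab
      · rw [d_comm]; exact hc b hb'
    · rcases mem_insert.1 hb with rfl | hb'
      · exact hc a ha'
      · exact hS.2 a ha' b hb' hab
  exact hy (hmax hgood (Finset.subset_insert y S) (mem_insert_self y S))

lemma count (hm : 8 ≤ m) : ∃ S : Finset (Fin m → Bool),
    (∀ x ∈ S, ∀ y ∈ S, x ≠ y → m ≤ 4 * d x y) ∧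
    2 ^ m ≤ S.card * ∑ i ∈ range ((m-1)/4 + 1), m.choose i := by
  obtain ⟨S, h1, h2⟩ := exists_packing (le_trans (by norm_num) hm)
  refine ⟨S, h1, ?_⟩
  set k := (m-1)/4 with hkdef
  have hcover : (univ : Finset (Fin m → Bool)) ⊆
      S.biUnion fun x => univ.filter fun y => d x y ≤ k := by
    intro y _
    obtain ⟨x, hx, hd⟩ := h2 y
    refine mem_biUnion.2 ⟨x, hx, mem_filter.2 ⟨mem_univ _, ?_⟩⟩
    have h3 : d x y * 4 ≤ m - 1 := by omega
    exact (Nat.le_div_iff_mul_le (by norm_num)).2 h3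
  calc 2 ^ m = (univ : Finset (Fin m → Bool)).card := by
        simp [card_univ]
    _ ≤ (S.biUnion fun x => univ.filter fun y => d x y ≤ k).card :=
        card_le_card hcover
    _ ≤ ∑ x ∈ S, (univ.filter fun y => d x y ≤ k).card := card_biUnion_le
    _ ≤ ∑ _x ∈ S, ∑ i ∈ range (k+1), m.choose i :=
        Finset.sum_le_sum fun x _ => card_ball k x
    _ = S.card * ∑ i ∈ range (k+1), m.choose i := by
        rw [Finset.sum_const, smul_eq_mul]


lemma key (m k : ℕ) (hk : 4 * k < m) :
    Real.exp ((m : ℝ) / 8) * ∑ i ∈ range (k+1), (m.choose i : ℝ) ≤ 2 ^ m := by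
  have hA : ∑ i ∈ range (k+1), (m.choose i : ℝ) ≤ 3 ^ k * (4/3) ^ m := by
    have h1 : ∀ i ∈ range (k+1), (m.choose i : ℝ) ≤ 3 ^ k * ((1/3 : ℝ) ^ i * m.choose i) := by
      intro i hi
      rw [mem_range, Nat.lt_succ_iff] at hi
      have hw : (1 : ℝ) ≤ 3 ^ k * (1/3) ^ i := by
        rw [one_div, inv_pow, ← div_eq_mul_inv, le_div_iff₀ (by positivity)]
        calc (1:ℝ) * 3 ^ i = 3 ^ i := one_mul _
          _ ≤ 3 ^ k := pow_le_pow_right₀ (by norm_num) hi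
      calc (m.choose i : ℝ) = 1 * m.choose i := (one_mul _).symm
        _ ≤ (3 ^ k * (1/3) ^ i) * m.choose i :=
            mul_le_mul_of_nonneg_right hw (by positivity)
        _ = 3 ^ k * ((1/3:ℝ) ^ i * m.choose i) := by ring
    calc ∑ i ∈ range (k+1), (m.choose i : ℝ)
        ≤ ∑ i ∈ range (k+1), 3 ^ k * ((1/3:ℝ) ^ i * m.choose i) := Finset.sum_le_sum h1
      _ = 3 ^ k * ∑ i ∈ range (k+1), (1/3:ℝ) ^ i * m.choose i := by rw [Finset.mul_sum]
      _ ≤ 3 ^ k * ∑ i ∈ range (m+1), (1/3:ℝ) ^ i * m.choose i := by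
          apply mul_le_mul_of_nonneg_left _ (by positivity)
          apply Finset.sum_le_sum_of_subset_of_nonneg
          · exact Finset.range_subset_range.2 (by omega)
          · intro i _ _; positivity
      _ = 3 ^ k * (4/3) ^ m := by
          congr 1
          have hb := add_pow (1/3 : ℝ) 1 m
          simp only [one_pow, mul_one] at hb
          rw [← hb]
          norm_num
  have he : Real.exp ((m:ℝ)/8) ^ 4 = Real.exp ((m:ℝ)/2) := by
    rw [← Real.exp_nat_mul]; norm_num; ring_nf
  have hexp : Real.exp ((m:ℝ)/2) ≤ (27/16 : ℝ) ^ m := by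
    have h1 : Real.exp (1/2 : ℝ) ≤ 27/16 := by
      have h2 : Real.exp (1/2 : ℝ) ^ 2 = Real.exp 1 := by
        rw [← Real.exp_nat_mul]; norm_num
      nlinarith [Real.exp_one_lt_d9, Real.exp_pos (1/2 : ℝ)]
    calc Real.exp ((m:ℝ)/2) = Real.exp (1/2:ℝ) ^ m := by
          rw [← Real.exp_nat_mul]; norm_num; ring_nf
      _ ≤ (27/16:ℝ) ^ m := pow_le_pow_left₀ (Real.exp_pos _).le h1 m
  have h3k : (3:ℝ) ^ (4 * k) ≤ 3 ^ m := pow_le_pow_right₀ (by norm_num) hk.le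
  have hB : Real.exp ((m:ℝ)/8) * (3 ^ k * (4/3) ^ m) ≤ 2 ^ m := by
    have hL : (Real.exp ((m:ℝ)/8) * ((3:ℝ) ^ k * (4/3) ^ m)) ^ 4
        = Real.exp ((m:ℝ)/2) * ((3:ℝ)^(4*k) * ((256/81:ℝ))^m) := by
      rw [mul_pow, mul_pow, he, ← pow_mul, mul_comm k 4, pow_right_comm]
      norm_num
    have key4 : Real.exp ((m:ℝ)/2) * ((3:ℝ)^(4*k) * (256/81:ℝ)^m) ≤ ((2:ℝ)^m)^4 := by
      have hR : ((2:ℝ)^m)^4 = (16:ℝ)^m := by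
        rw [pow_right_comm]; norm_num
      rw [hR]
      calc Real.exp ((m:ℝ)/2) * ((3:ℝ)^(4*k) * (256/81:ℝ)^m)
          ≤ (27/16:ℝ)^m * ((3:ℝ)^m * (256/81:ℝ)^m) := by
            apply mul_le_mul hexp _ (by positivity) (by positivity)
            exact mul_le_mul_of_nonneg_right h3k (by positivity)
        _ = ((27/16:ℝ) * (3 * (256/81))) ^ m := by rw [mul_pow, mul_pow]
        _ = (16:ℝ)^m := by norm_num
    exact le_of_pow_le_pow_left₀ (by norm_num) (by positivity) (hL ▸ key4)
  calc Real.exp ((m : ℝ) / 8) * ∑ i ∈ range (k+1), (m.choose i : ℝ)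
      ≤ Real.exp ((m:ℝ)/8) * (3 ^ k * (4/3) ^ m) :=
        mul_le_mul_of_nonneg_left hA (Real.exp_pos _).le
    _ ≤ 2 ^ m := hB

end VG

/-- Varshamov–Gilbert bound: for `m ≥ 8` there is a set `Λ` of sign vectors in
`{-1, 1}^m` with `|Λ| ≥ e^{m/8}` whose distinct elements `ι, ι'` satisfy
`‖ι - ι'‖₁ = 2 ∑_j 1_{ι_j ≠ ι'_j} ≥ m/2`. -/
theorem stmt_16 (m : ℕ) (hm : 8 ≤ m) :
    ∃ Λ : Finset (Fin m → ℝ),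
      (∀ ι ∈ Λ, ∀ j, ι j = 1 ∨ ι j = -1) ∧
      Real.exp ((m : ℝ) / 8) ≤ (Λ.card : ℝ) ∧
      ∀ ι ∈ Λ, ∀ ι' ∈ Λ, ι ≠ ι' →
        (m : ℝ) / 2 ≤ ∑ j, |ι j - ι' j| := by
  classical
  obtain ⟨S, hS, hcount⟩ := VG.count hm
  set k := (m-1)/4 with hkdef
  have hk4 : 4 * k < m := by
    have := Nat.div_mul_le_self (m-1) 4
    omega
  set σ : (Fin m → Bool) → (Fin m → ℝ) := fun x j => if x j then (1:ℝ) else -1 with hσ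
  have hinj : Function.Injective σ := by
    intro x x' h
    funext j
    have h2 := congrFun h j
    simp only [hσ] at h2
    cases hx : x j <;> cases hx' : x' j <;> simp [hx, hx'] at h2 <;> first | rfl | norm_num at h2
  refine ⟨S.image σ, ?_, ?_, ?_⟩
  · intro ι hι j
    obtain ⟨x, _, rfl⟩ := mem_image.1 hι
    by_cases hx : x j <;> simp [hσ, hx]
  · rw [Finset.card_image_of_injective _ hinj]
    set B := ∑ i ∈ range (k+1), m.choose i with hB
    have hB1 : 1 ≤ B := by
      rw [hB]
      calc 1 = m.choose 0 := (Nat.choose_zero_right m).symm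
        _ ≤ ∑ i ∈ range (k+1), m.choose i :=
          Finset.single_le_sum (fun i _ => Nat.zero_le _) (mem_range.2 (Nat.succ_pos _))
    have hkey := VG.key m k hk4
    have hc : (2:ℝ) ^ m ≤ (S.card : ℝ) * B := by
      calc (2:ℝ)^m = ((2^m : ℕ) : ℝ) := by push_cast; ring
        _ ≤ ((S.card * B : ℕ) : ℝ) := by exact_mod_cast hcount
        _ = (S.card : ℝ) * B := by push_cast; ring
    have hBR : Real.exp ((m : ℝ) / 8) * (B : ℝ) ≤ 2 ^ m := by
      have : ((B : ℕ) : ℝ) = ∑ i ∈ range (k+1), (m.choose i : ℝ) := by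
        rw [hB]; push_cast; ring
      rw [this]; exact hkey
    have hBpos : (0:ℝ) < B := by exact_mod_cast hB1
    have := le_trans hBR hc
    exact le_of_mul_le_mul_right this hBpos
  · intro ι hι ι' hι' hne
    obtain ⟨x, hx, rfl⟩ := mem_image.1 hι
    obtain ⟨x', hx', rfl⟩ := mem_image.1 hι'
    have hxx' : x ≠ x' := fun h => hne (by rw [h])
    have hd := hS x hx x' hx' hxx'
    have hsum : ∑ j, |σ x j - σ x' j| = 2 * (VG.d x x' : ℝ) := by
      have h1 : ∀ j, |σ x j - σ x' j| = if x j ≠ x' j then (2:ℝ) else 0 := by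
        intro j
        cases h : x j <;> cases h' : x' j <;> simp [hσ, h, h'] <;> norm_num
      rw [Finset.sum_congr rfl (fun j _ => h1 j), Finset.sum_ite, Finset.sum_const,
        Finset.sum_const]
      simp [VG.d]
      ring
    rw [hsum]
    have : (m : ℝ) ≤ 4 * (VG.d x x' : ℝ) := by exact_mod_cast hd
    linarith
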